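/- For every positive integer n and every positive integer j, there exists a (j/2)-Eulerian graded poset of rank n+1; namely, D^j C, where C is the chain of rank n+1, is (j/2)-Eulerian. -/

import Mathlib

open scoped Classical

attribute [local instance] Fintype.ofFinite

/-- A rank function making a bounded poset graded of rank `n+1`. -/
def IsGraded (P : Type) [PartialOrder P] [BoundedOrder P] (ρ : P → ℕ) (n : ℕ) : Prop :=
  ρ ⊥ = 0 ∧ ρ ⊤ = n + 1 ∧ ∀ x y : P, x ⋖ y → ρ y = ρ x + 1

/-- A poset is `r`-thick if every nonempty open interval has at least `r` elements. -/
def RThick (P : Type) [PartialOrder P] [Fintype P] (r : ℕ) : Prop :=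
  ∀ x y : P, x < y → (∃ z, x < z ∧ z < y) →
    r ≤ (Finset.univ.filter fun z => x < z ∧ z < y).card

/-- The flag number `f_S(P)`: the number of chains of `P` whose set of ranks is `S`. -/
noncomputable def flagNum {P : Type} [PartialOrder P] [Fintype P] (ρ : P → ℕ)
    (S : Finset ℕ) : ℕ :=
  (Finset.univ.filter fun c : Finset P =>
    IsChain (· ≤ ·) (c : Set P) ∧ c.image ρ = S ∧ c.card = S.card).card

/-- The flag number `f_S([x,y])` of the interval `[x,y]`, with ranks relative to `x`. -/
noncomputable def flagNumI {P : Type} [PartialOrder P] [Fintype P] (ρ : P → ℕ)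
    (x y : P) (S : Finset ℕ) : ℕ :=
  (Finset.univ.filter fun c : Finset P =>
    IsChain (· ≤ ·) (c : Set P) ∧ (∀ z ∈ c, x < z ∧ z < y) ∧
      c.image (fun z => ρ z - ρ x) = S ∧ c.card = S.card).card

/-- The `k`-Möbius function `μ_k([x,y])`. -/
noncomputable def muk {P : Type} [PartialOrder P] [Fintype P] (k : ℝ) (x : P) (y : P) : ℝ :=
  if x = y then 1
  else -1 - (1/k) * ∑ z ∈ (Finset.univ.filter fun z => x < z ∧ z < y).attach,
    muk k x z.val
termination_by (Finset.univ.filter fun w => w < y).card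
decreasing_by
  have hz : (z : P) < y := (Finset.mem_filter.mp z.2).2.2
  apply Finset.card_lt_card
  rw [Finset.ssubset_iff_of_subset]
  · exact ⟨z, Finset.mem_filter.mpr ⟨Finset.mem_univ _, hz⟩,
      fun hc => absurd (Finset.mem_filter.mp hc).2 (lt_irrefl _)⟩
  · intro w hw
    exact Finset.mem_filter.mpr ⟨Finset.mem_univ _, (Finset.mem_filter.mp hw).2.trans hz⟩

/-- The ordinary Möbius function of a finite poset. -/
noncomputable def mobius {P : Type} [PartialOrder P] [Fintype P] (x : P) (y : P) : ℤ :=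
  if x = y then 1
  else -∑ z ∈ (Finset.univ.filter fun z => x ≤ z ∧ z < y).attach, mobius x z.val
termination_by (Finset.univ.filter fun w => w < y).card
decreasing_by
  have hz : (z : P) < y := (Finset.mem_filter.mp z.2).2.2
  apply Finset.card_lt_card
  rw [Finset.ssubset_iff_of_subset]
  · exact ⟨z, Finset.mem_filter.mpr ⟨Finset.mem_univ _, hz⟩,
      fun hc => absurd (Finset.mem_filter.mp hc).2 (lt_irrefl _)⟩
  · intro w hw
    exact Finset.mem_filter.mpr ⟨Finset.mem_univ _, (Finset.mem_filter.mp hw).2.trans hz⟩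

/-- A graded poset is `k`-Eulerian when `μ_k([x,y]) = (-1)^{ρ(y)-ρ(x)}` on every interval. -/
def IsKEulerian (P : Type) [PartialOrder P] [Fintype P] (ρ : P → ℕ) (k : ℝ) : Prop :=
  ∀ x y : P, x ≤ y → muk k x y = (-1 : ℝ) ^ (ρ y - ρ x)

/-- The flag `L^k` vector of a poset of rank `n+1`. -/
noncomputable def Lk {P : Type} [PartialOrder P] [Fintype P] (k : ℝ) (n : ℕ) (ρ : P → ℕ)
    (S : Finset ℕ) : ℝ :=
  (-1 : ℝ) ^ (n - S.card) *
    ∑ T ∈ (Finset.Icc 1 n).powerset.filter (fun T => Finset.Icc 1 n \ S ⊆ T),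
      (-(1/(2*k))) ^ T.card * (flagNum ρ T : ℝ)

/-- The flag `L^k` vector of an interval `[x,y]` of rank `n+1`. -/
noncomputable def LkI {P : Type} [PartialOrder P] [Fintype P] (k : ℝ) (n : ℕ) (ρ : P → ℕ)
    (x y : P) (S : Finset ℕ) : ℝ :=
  (-1 : ℝ) ^ (n - S.card) *
    ∑ T ∈ (Finset.Icc 1 n).powerset.filter (fun T => Finset.Icc 1 n \ S ⊆ T),
      (-(1/(2*k))) ^ T.card * (flagNumI ρ x y T : ℝ)

/-- A set is even if it is a disjoint union of intervals of even cardinality. -/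
def IsEvenSet (S : Finset ℕ) : Prop :=
  ∃ J : Finset (ℕ × ℕ),
    S = J.biUnion (fun p => Finset.Icc p.1 p.2) ∧
    (∀ p ∈ J, p.1 ≤ p.2 ∧ Even (p.2 + 1 - p.1)) ∧
    (∀ p ∈ J, ∀ q ∈ J, p ≠ q → Disjoint (Finset.Icc p.1 p.2) (Finset.Icc q.1 q.2))

/-- The horizontal `r`-fold duplication `D^r P`. -/
inductive Dup (P : Type) [PartialOrder P] [BoundedOrder P] (r : ℕ) : Type where
  | bot : Dup P r
  | top : Dup P r
  | mid : {x : P // x ≠ ⊥ ∧ x ≠ ⊤} → Fin r → Dup P r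

namespace Dup

variable {P : Type} [PartialOrder P] [BoundedOrder P] {r : ℕ}

def le : Dup P r → Dup P r → Prop
  | .bot, _ => True
  | .mid _ _, .bot => False
  | .mid x i, .mid y j => (x = y ∧ i = j) ∨ (x : P) < (y : P)
  | .mid _ _, .top => True
  | .top, .top => True
  | .top, _ => False

instance : PartialOrder (Dup P r) where
  le := Dup.le
  le_refl a := by cases a with
    | bot => trivial
    | top => trivial
    | mid x i => exact Or.inl ⟨rfl, rfl⟩
  le_trans a b c hab hbc := by
    cases a with
    | bot => trivial
    | top =>
      cases b with
      | top =>
        cases c with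
        | top => trivial
        | bot => exact hbc.elim
        | mid _ _ => exact hbc.elim
      | bot => exact hab.elim
      | mid _ _ => exact hab.elim
    | mid x i =>
      cases b with
      | bot => exact hab.elim
      | top =>
        cases c with
        | top => trivial
        | bot => exact hbc.elim
        | mid _ _ => exact hbc.elim
      | mid y j =>
        cases c with
        | bot => exact hbc.elim
        | top => trivial
        | mid z l =>
          rcases hab with ⟨rfl, rfl⟩ | h1
          · exact hbc
          · rcases hbc with ⟨rfl, rfl⟩ | h2
            · exact Or.inr h1
            · exact Or.inr (h1.trans h2)
  le_antisymm a b hab hba := by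
    cases a with
    | bot =>
      cases b with
      | bot => rfl
      | top => exact hba.elim
      | mid _ _ => exact hba.elim
    | top =>
      cases b with
      | top => rfl
      | bot => exact hab.elim
      | mid _ _ => exact hab.elim
    | mid x i =>
      cases b with
      | bot => exact hab.elim
      | top => exact hba.elim
      | mid y j =>
        rcases hab with ⟨rfl, rfl⟩ | h1
        · rfl
        · rcases hba with ⟨rfl, rfl⟩ | h2
          · exact absurd h1 (lt_irrefl _)
          · exact absurd (h1.trans h2) (lt_irrefl _)

instance : BoundedOrder (Dup P r) where
  top := .top
  bot := .bot
  le_top a := by cases a <;> trivial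
  bot_le a := trivial

instance [Finite P] : Finite (Dup P r) :=
  Finite.of_injective
    (fun a : Dup P r =>
      (match a with
        | .bot => none
        | .top => some none
        | .mid x i => some (some (x, i)) :
        Option (Option ({x : P // x ≠ ⊥ ∧ x ≠ ⊤} × Fin r))))
    (by intro a b h; cases a <;> cases b <;> simp_all)

/-- The rank function of `D^r P`, where `P` has rank `n+1`. -/
def rank (ρ : P → ℕ) (n : ℕ) : Dup P r → ℕ
  | .bot => 0
  | .top => n + 1
  | .mid x _ => ρ x.val

/-- `a ∈ D^r P` is a copy of `x ∈ P`. -/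
def IsCopy (a : Dup P r) (x : P) : Prop :=
  (x = ⊥ ∧ a = .bot) ∨ (x = ⊤ ∧ a = .top) ∨ ∃ h i, a = .mid ⟨x, h⟩ i

end Dup


section Aux

variable {n j : ℕ}

local notation "rk" => Dup.rank (fun x : Fin (n+2) => ((x : ℕ))) n

lemma dupRank_le (a : Dup (Fin (n+2)) j) : rk a ≤ n + 1 := by
  cases a with
  | bot => exact Nat.zero_le _
  | top => exact le_refl _
  | mid x i => exact Nat.lt_succ_iff.mp x.1.isLt

lemma rank_lt_of_lt {a b : Dup (Fin (n+2)) j} (h : a < b) : rk a < rk b := by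
  have hle : Dup.le a b := h.le
  have hne : a ≠ b := h.ne
  cases a with
  | bot =>
    cases b with
    | bot => exact absurd rfl hne
    | top => exact Nat.succ_pos n
    | mid y l =>
      have : y.1 ≠ ⊥ := y.2.1
      have hv : (y.1 : ℕ) ≠ 0 := by
        intro h0
        exact this (Fin.ext (by simpa [Fin.bot_eq_zero] using h0))
      exact Nat.pos_of_ne_zero hv
  | top =>
    cases b with
    | bot => exact hle.elim
    | top => exact absurd rfl hne
    | mid y l => exact hle.elim
  | mid x i =>
    cases b with
    | bot => exact hle.elim
    | top =>
      have : x.1 ≠ ⊤ := x.2.2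
      have hv : (x.1 : ℕ) ≠ n + 1 := by
        intro h0
        exact this (Fin.ext (by simpa [Fin.top_eq_last, Fin.last] using h0))
      exact lt_of_le_of_ne (Nat.lt_succ_iff.mp x.1.isLt) hv
    | mid y l =>
      rcases hle with ⟨rfl, rfl⟩ | hlt
      · exact absurd rfl hne
      · exact hlt

lemma lt_mid {x y : Dup (Fin (n+2)) j} {c : {v : Fin (n+2) // v ≠ ⊥ ∧ v ≠ ⊤}}
    (ht1 : rk x < (c.1 : ℕ)) (ht2 : ((c.1 : ℕ)) < rk y) (i : Fin j) :
    x < Dup.mid c i ∧ Dup.mid c i < y := by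
  constructor
  · apply lt_of_le_of_ne
    · show Dup.le x (Dup.mid c i)
      cases x with
      | bot => trivial
      | top =>
        exfalso
        have := Nat.lt_succ_iff.mp c.1.isLt
        simp only [Dup.rank] at ht1
        omega
      | mid a i' =>
        exact Or.inr (by exact ht1)
    · intro he
      rw [he] at ht1
      exact lt_irrefl _ ht1
  · apply lt_of_le_of_ne
    · show Dup.le (Dup.mid c i) y
      cases y with
      | bot => exact absurd ht2 (by simp [Dup.rank])
      | top => trivial
      | mid b l =>
        exact Or.inr (by exact ht2)
    · intro he
      rw [← he] at ht2
      exact lt_irrefl _ ht2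

lemma between_mem {x y : Dup (Fin (n+2)) j} (hj : 1 ≤ j) {t : ℕ}
    (ht1 : rk x < t) (ht2 : t < rk y) :
    ∃ z : Dup (Fin (n+2)) j, x < z ∧ z < y ∧ rk z = t := by
  have hb : 1 ≤ t := Nat.one_le_iff_ne_zero.mpr (by omega)
  have htop : t ≤ n := by
    have := dupRank_le (n := n) (j := j) y
    omega
  have hlt2 : t < n + 2 := by omega
  set c : Fin (n+2) := ⟨t, hlt2⟩ with hc
  have hc1 : c ≠ ⊥ := by
    intro h
    have : (c : ℕ) = 0 := by rw [h]; simp [Fin.bot_eq_zero]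
    simp [hc] at this; omega
  have hc2 : c ≠ ⊤ := by
    intro h
    have : (c : ℕ) = n + 1 := by rw [h]; simp [Fin.top_eq_last, Fin.last]
    simp [hc] at this; omega
  obtain ⟨h1, h2⟩ := lt_mid (x := x) (y := y) (c := ⟨c, hc1, hc2⟩)
    (by simpa [hc] using ht1) (by simpa [hc] using ht2) ⟨0, hj⟩
  exact ⟨Dup.mid ⟨c, hc1, hc2⟩ ⟨0, hj⟩, h1, h2, rfl⟩

lemma mid_of_between {x y z : Dup (Fin (n+2)) j} (h1 : x < z) (h2 : z < y) :
    ∃ c i, z = Dup.mid c i := by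
  cases z with
  | bot =>
    have := rank_lt_of_lt h1
    simp [Dup.rank] at this
  | top =>
    have := rank_lt_of_lt h2
    have := dupRank_le (n := n) (j := j) y
    simp [Dup.rank] at *
    omega
  | mid c i => exact ⟨c, i, rfl⟩

lemma fiber_card [Fintype (Dup (Fin (n+2)) j)] {x y : Dup (Fin (n+2)) j} {t : ℕ}
    (ht1 : rk x < t) (ht2 : t < rk y) :
    ((Finset.univ.filter fun z : Dup (Fin (n+2)) j => x < z ∧ z < y).filter
      (fun z => rk z = t)).card = j := by
  have hb : 1 ≤ t := by omega
  have htop : t ≤ n := by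
    have := dupRank_le (n := n) (j := j) y
    omega
  have hlt2 : t < n + 2 := by omega
  set c : Fin (n+2) := ⟨t, hlt2⟩ with hc
  have hc1 : c ≠ ⊥ := by
    intro h
    have : (c : ℕ) = 0 := by rw [h]; simp [Fin.bot_eq_zero]
    simp [hc] at this; omega
  have hc2 : c ≠ ⊤ := by
    intro h
    have : (c : ℕ) = n + 1 := by rw [h]; simp [Fin.top_eq_last, Fin.last]
    simp [hc] at this; omega
  have hset : ((Finset.univ.filter fun z : Dup (Fin (n+2)) j => x < z ∧ z < y).filter
      (fun z => rk z = t))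
      = Finset.univ.image (fun i : Fin j => Dup.mid ⟨c, hc1, hc2⟩ i) := by
    ext z
    simp only [Finset.mem_filter, Finset.mem_univ, true_and, Finset.mem_image]
    constructor
    · rintro ⟨⟨h1, h2⟩, hr⟩
      obtain ⟨d, i, rfl⟩ := mid_of_between h1 h2
      refine ⟨i, ?_⟩
      congr 1
      apply Subtype.ext
      apply Fin.ext
      simpa [Dup.rank, hc] using hr.symm
    · rintro ⟨i, rfl⟩
      obtain ⟨h1, h2⟩ := lt_mid (x := x) (y := y) (c := ⟨c, hc1, hc2⟩)
        (by simpa [hc] using ht1) (by simpa [hc] using ht2) i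
      exact ⟨⟨h1, h2⟩, rfl⟩
  rw [hset, Finset.card_image_of_injective _ (fun a b hab => by
    cases hab; rfl), Finset.card_univ, Fintype.card_fin]

lemma image_rank [Fintype (Dup (Fin (n+2)) j)] (hj : 1 ≤ j) {x y : Dup (Fin (n+2)) j}
    (hxy : x < y) :
    (Finset.univ.filter fun z : Dup (Fin (n+2)) j => x < z ∧ z < y).image rk
      = Finset.Ioo (rk x) (rk y) := by
  ext t
  simp only [Finset.mem_image, Finset.mem_filter, Finset.mem_univ, true_and,
    Finset.mem_Ioo]
  constructor
  · rintro ⟨z, ⟨h1, h2⟩, rfl⟩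
    exact ⟨rank_lt_of_lt h1, rank_lt_of_lt h2⟩
  · rintro ⟨h1, h2⟩
    obtain ⟨z, hz1, hz2, hz3⟩ := between_mem hj h1 h2
    exact ⟨z, ⟨hz1, hz2⟩, hz3⟩

lemma muk_eq [Fintype (Dup (Fin (n+2)) j)] (hj : 1 ≤ j) :
    ∀ m : ℕ, ∀ x y : Dup (Fin (n+2)) j, x ≤ y → rk y - rk x = m →
      muk ((j : ℝ)/2) x y = (-1 : ℝ)^m := by
  intro m
  induction m using Nat.strong_induction_on with
  | _ m ih =>
    intro x y hxy hm
    by_cases hxyeq : x = y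
    · subst hxyeq
      rw [muk]
      simp only [if_pos rfl]
      have : m = 0 := by omega
      simp [this]
    · have hlt : x < y := lt_of_le_of_ne hxy hxyeq
      have hr : rk x < rk y := rank_lt_of_lt hlt
      have hm1 : 1 ≤ m := by omega
      rw [muk, if_neg hxyeq]
      have hsum : ∑ z ∈ (Finset.univ.filter fun z : Dup (Fin (n+2)) j =>
          x < z ∧ z < y).attach, muk ((j : ℝ)/2) x z.val
          = ∑ z ∈ (Finset.univ.filter fun z : Dup (Fin (n+2)) j => x < z ∧ z < y),
              (-1 : ℝ) ^ (rk z - rk x) := by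
        rw [← Finset.sum_attach (Finset.univ.filter fun z : Dup (Fin (n+2)) j =>
          x < z ∧ z < y) (fun z => (-1 : ℝ) ^ (rk z - rk x))]
        apply Finset.sum_congr rfl
        intro z _
        have hz := Finset.mem_filter.mp z.2
        have h1 : x < z.val := hz.2.1
        have h2 : (z : Dup (Fin (n+2)) j) < y := hz.2.2
        have hrz1 := rank_lt_of_lt h1
        have hrz2 := rank_lt_of_lt h2
        exact ih (rk z.val - rk x) (by omega) x z.val h1.le rfl
      rw [hsum]
      have hcomp : ∑ z ∈ (Finset.univ.filter fun z : Dup (Fin (n+2)) j => x < z ∧ z < y),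
          (-1 : ℝ) ^ (rk z - rk x)
          = ∑ t ∈ Finset.Ioo (rk x) (rk y), (j : ℝ) * (-1 : ℝ) ^ (t - rk x) := by
        rw [Finset.sum_comp (fun t => (-1 : ℝ) ^ (t - rk x)) rk, image_rank hj hlt]
        apply Finset.sum_congr rfl
        intro t ht
        rw [Finset.mem_Ioo] at ht
        rw [fiber_card ht.1 ht.2, nsmul_eq_mul]
      rw [hcomp, ← Finset.mul_sum]
      have hioo : ∑ t ∈ Finset.Ioo (rk x) (rk y), (-1 : ℝ) ^ (t - rk x)
          = -(if Even (m - 1) then (0:ℝ) else 1) := by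
        rw [← Finset.Ico_add_one_left_eq_Ioo, Finset.sum_Ico_eq_sum_range]
        have hc : rk y - (rk x + 1) = m - 1 := by omega
        rw [hc]
        have : ∀ s ∈ Finset.range (m - 1),
            (-1 : ℝ) ^ (rk x + 1 + s - rk x) = -(-1 : ℝ) ^ s := by
          intro s _
          have : rk x + 1 + s - rk x = s + 1 := by omega
          rw [this, pow_succ]
          ring
        rw [Finset.sum_congr rfl this, Finset.sum_neg_distrib, neg_one_geom_sum]
      rw [hioo]
      have hjne : (j : ℝ) ≠ 0 := by positivity
      rcases Nat.even_or_odd m with hme | hmo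
      · have hne1 : ¬ Even (m - 1) := by
          rw [Nat.even_sub hm1]
          simp [hme, Nat.not_even_one]
        rw [if_neg hne1, hme.neg_one_pow]
        field_simp
        ring
      · have he1 : Even (m - 1) := by
          rw [Nat.even_sub hm1]
          simp [Nat.not_even_iff_odd.mpr hmo, Nat.not_even_one]
        rw [if_pos he1, hmo.neg_one_pow]
        simp

end Aux

/-- `D^j C`, for `C` the chain of rank `n+1`, is a `(j/2)`-Eulerian
graded poset of rank `n+1`. -/
theorem dup_chain_isKEulerian (n j : ℕ) (hj : 1 ≤ j) :
    IsGraded (Dup (Fin (n + 2)) j) (Dup.rank (fun x => (x : ℕ)) n) n ∧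
    IsKEulerian (Dup (Fin (n + 2)) j) (Dup.rank (fun x => (x : ℕ)) n) ((j : ℝ) / 2) := by
  constructor
  · refine ⟨rfl, rfl, ?_⟩
    intro x y hxy
    have hlt := hxy.1
    have hr := rank_lt_of_lt hlt
    by_contra hne
    have h2 : Dup.rank (fun x : Fin (n+2) => (x : ℕ)) n x + 1
        < Dup.rank (fun x : Fin (n+2) => (x : ℕ)) n y := by
      omega
    obtain ⟨z, hz1, hz2, -⟩ := between_mem (x := x) (y := y) hj
      (t := Dup.rank (fun x : Fin (n+2) => (x : ℕ)) n x + 1) (by omega) h2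
    exact hxy.2 hz1 hz2
  · intro x y hxy
    exact muk_eq hj _ x y hxy rfl
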